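/- arXiv:1403.5721 — 2 statements merged into one kernel-verified Lean document; each statement's English description precedes it below -/
import Mathlib

section
/- Let h : ℕ → ℕ be a nondecreasing unbounded function (an order function) such that for every real d > 0 the series ∑_{x=0}^∞ 2^{-d·h(x)} diverges. Then for every real c > 0 there exists n > 0 with h(⌈2^{c·n}⌉) ≤ n. -/
open Filter

set_option maxHeartbeats 1000000 in
theorem stmt_0 (h : ℕ → ℕ) (hmono : Monotone h) (hunb : ∀ m : ℕ, ∃ n, m < h n)
    (hdiv : ∀ d : ℝ, 0 < d → ¬ Summable (fun x : ℕ => (2:ℝ) ^ (-(d * h x)))) :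
    ∀ c : ℝ, 0 < c → ∃ n : ℕ, 0 < n ∧ h ⌈(2:ℝ) ^ (c * n)⌉₊ ≤ n := by
  intro c hc
  by_contra hcon
  push_neg at hcon
  apply hdiv (2 * c) (by linarith)
  have key : ∀ x : ℕ, (2:ℝ) ^ c ≤ x →
      (2:ℝ) ^ (-(2 * c * h x)) ≤ 1 / (x:ℝ) ^ 2 := by
    intro x hx
    have hx0 : (0:ℝ) < x := lt_of_lt_of_le (Real.rpow_pos_of_pos two_pos c) hx
    set L := Real.logb 2 x with hL
    have hLc : c ≤ L := by
      have h1 : Real.logb 2 ((2:ℝ) ^ c) ≤ L :=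
        Real.logb_le_logb_of_le one_lt_two (Real.rpow_pos_of_pos two_pos c) hx
      rwa [Real.logb_rpow (by norm_num) (by norm_num)] at h1
    set n := ⌊L / c⌋₊ with hn
    have hn1 : 1 ≤ n := Nat.le_floor (by rw [le_div_iff₀ hc]; simpa using hLc)
    have hcn : c * n ≤ L := by
      have h2 : (n:ℝ) ≤ L / c := Nat.floor_le (div_nonneg (by linarith) hc.le)
      calc c * n ≤ c * (L / c) := by nlinarith
        _ = L := by field_simp
    have h2 : (2:ℝ) ^ (c * n) ≤ x := by
      calc (2:ℝ) ^ (c * n) ≤ 2 ^ L := Real.rpow_le_rpow_of_exponent_le one_le_two hcn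
        _ = x := Real.rpow_logb two_pos (by norm_num) hx0
    have hceil : ⌈(2:ℝ) ^ (c * n)⌉₊ ≤ x := Nat.ceil_le.mpr h2
    have hhx : n + 1 ≤ h x := le_trans (hcon n hn1) (hmono hceil)
    have hLn : L / c < n + 1 := by
      have := Nat.lt_floor_add_one (L / c)
      push_cast at this ⊢
      linarith
    have hbig : 2 * L ≤ 2 * c * h x := by
      have hL1 : L < c * (n + 1) := by
        rw [div_lt_iff₀ hc] at hLn; linarith [hLn]
      have : (n:ℝ) + 1 ≤ (h x : ℝ) := by exact_mod_cast hhx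
      nlinarith
    calc (2:ℝ) ^ (-(2 * c * h x)) ≤ 2 ^ (-(2 * L)) := by
          apply Real.rpow_le_rpow_of_exponent_le one_le_two; linarith
      _ = ((2:ℝ) ^ L) ^ (-2 : ℝ) := by
          rw [← Real.rpow_mul (by norm_num)]
          ring_nf
      _ = (x:ℝ) ^ (-2 : ℝ) := by rw [Real.rpow_logb two_pos (by norm_num) hx0]
      _ = 1 / (x:ℝ) ^ 2 := by
          rw [show ((-2:ℝ)) = ((-2:ℤ):ℝ) by norm_num, Real.rpow_intCast, one_div,
            zpow_neg]
          norm_cast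
  set N := ⌈(2:ℝ) ^ c⌉₊ with hN
  have hsum : Summable (fun x : ℕ => 1 / ((x + N : ℕ) : ℝ) ^ 2) :=
    (summable_nat_add_iff N).mpr (Real.summable_one_div_nat_pow.mpr (le_refl 2))
  have hmain : Summable (fun x : ℕ => (2:ℝ) ^ (-(2 * c * h (x + N)))) := by
    refine Summable.of_nonneg_of_le (fun x => ?_) (fun x => ?_) hsum
    · positivity
    · refine key (x + N) ?_
      calc (2:ℝ) ^ c ≤ N := Nat.le_ceil _
        _ ≤ ((x + N : ℕ) : ℝ) := by push_cast; linarith [Nat.cast_nonneg (α := ℝ) x]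
  exact (summable_nat_add_iff N).mp hmain
end

section
/- Let f : ℝ → ℝ be nondecreasing, let z ∈ I ∩ J where I = [k·2^{-m}, (k+1)·2^{-m}] and J = [p·2^{-m} + 1/3, (p+1)·2^{-m} + 1/3] for integers k, p and m ≥ 1. Suppose z ∈ L for a closed interval L of length d with 2^{-m}/3 ≥ d ≥ 2^{-m-1}/3. Then S(L)/12 ≤ max(S(I), S(J)), where S(K) denotes the slope of f over the interval K. -/
/-- Slope of `f` over the interval `[a, b]`. -/
noncomputable def slope' (f : ℝ → ℝ) (a b : ℝ) : ℝ := (f b - f a) / (b - a)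

lemma aux_sum (f : ℝ → ℝ) (hf : Monotone f) (a b z u d h : ℝ)
    (hdh : d ≤ h / 3) (hab : h / 3 ≤ b - a)
    (hzI : z ∈ Set.Icc a (a + h)) (hzJ : z ∈ Set.Icc b (b + h))
    (hzL : z ∈ Set.Icc u (u + d)) :
    f (u + d) - f u ≤ (f (a + h) - f a) + (f (b + h) - f b) := by
  obtain ⟨hz1, hz2⟩ := hzI
  obtain ⟨hz3, hz4⟩ := hzJ
  obtain ⟨hz5, hz6⟩ := hzL
  have h1 : f (u + d) ≤ f (b + h) := hf (by linarith)
  have h2 : f a ≤ f u := hf (by linarith)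
  have h3 : f b ≤ f (a + h) := hf (by linarith)
  linarith

lemma final_ineq (x y w d h : ℝ) (hd0 : 0 < d) (hh0 : 0 < h) (hd6 : h / 6 ≤ d)
    (hx : 0 ≤ x) (hw0 : 0 ≤ w) (hS : w ≤ x + y) :
    w / d / 12 ≤ max (x / h) (y / h) := by
  set M := max (x / h) (y / h) with hM
  have hM0 : 0 ≤ M := le_max_of_le_left (by positivity)
  have hxM : x ≤ M * h := by
    have h1 := le_max_left (x / h) (y / h)
    calc x = x / h * h := by field_simp
    _ ≤ M * h := by gcongr
  have hyM : y ≤ M * h := by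
    have h1 := le_max_right (x / h) (y / h)
    calc y = y / h * h := by field_simp
    _ ≤ M * h := by gcongr
  have hw : w ≤ 2 * M * h := by linarith
  calc w / d / 12 = w / (12 * d) := by ring
  _ ≤ w / (2 * h) := by
      rw [div_le_div_iff₀ (by positivity) (by positivity)]
      nlinarith
  _ ≤ (2 * M * h) / (2 * h) := by gcongr
  _ = M := by field_simp

theorem stmt_4 (f : ℝ → ℝ) (hf : Monotone f) (k p : ℤ) (m : ℕ) (hm : 1 ≤ m)
    (z u d : ℝ)
    (hzI : z ∈ Set.Icc ((k : ℝ) * 2 ^ (-(m : ℤ))) (((k : ℝ) + 1) * 2 ^ (-(m : ℤ))))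
    (hzJ : z ∈ Set.Icc ((p : ℝ) * 2 ^ (-(m : ℤ)) + 1 / 3)
            (((p : ℝ) + 1) * 2 ^ (-(m : ℤ)) + 1 / 3))
    (hzL : z ∈ Set.Icc u (u + d))
    (hd₁ : d ≤ (2 : ℝ) ^ (-(m : ℤ)) / 3) (hd₂ : (2 : ℝ) ^ (-(m : ℤ) - 1) / 3 ≤ d) :
    slope' f u (u + d) / 12 ≤
      max (slope' f ((k : ℝ) * 2 ^ (-(m : ℤ))) (((k : ℝ) + 1) * 2 ^ (-(m : ℤ))))
        (slope' f ((p : ℝ) * 2 ^ (-(m : ℤ)) + 1 / 3)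
          (((p : ℝ) + 1) * 2 ^ (-(m : ℤ)) + 1 / 3)) := by
  have hpos : (0 : ℝ) < 2 ^ (-(m : ℤ)) := by positivity
  set h : ℝ := 2 ^ (-(m : ℤ)) with hh
  have hd0 : 0 < d := lt_of_lt_of_le (by positivity) hd₂
  have hhalf : (2 : ℝ) ^ (-(m : ℤ) - 1) = h / 2 := by
    rw [hh, zpow_sub₀ (by norm_num : (2 : ℝ) ≠ 0)]
    norm_num
  have hd6 : h / 6 ≤ d := by rw [hhalf] at hd₂; linarith
  set a : ℝ := (k : ℝ) * h with ha
  set b : ℝ := (p : ℝ) * h + 1 / 3 with hb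
  have key : h / 3 ≤ |b - a| := by
    have hN : (3 * (p - k) + 2 ^ m : ℤ) ≠ 0 := by
      intro hc
      have hdvd : (3 : ℤ) ∣ 2 ^ m := ⟨-(p - k), by linarith⟩
      have h32 : (3 : ℤ) ∣ 2 := Int.prime_three.dvd_of_dvd_pow hdvd
      omega
    have hN1 : (1 : ℝ) ≤ |((3 * (p - k) + 2 ^ m : ℤ) : ℝ)| := by
      rw [← Int.cast_abs]
      exact_mod_cast Int.one_le_abs hN
    have h2m : (0 : ℝ) < (2 : ℝ) ^ m := by positivity
    have hrw : b - a = ((3 * (p - k) + 2 ^ m : ℤ) : ℝ) / (3 * 2 ^ m) := by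
      rw [hb, ha, hh, zpow_neg, zpow_natCast]
      push_cast
      field_simp
      ring
    have hh' : h = ((2 : ℝ) ^ m)⁻¹ := by rw [hh, zpow_neg, zpow_natCast]
    rw [hrw, abs_div, abs_of_pos (by positivity : (0:ℝ) < 3 * (2:ℝ) ^ m), hh']
    rw [div_le_div_iff₀ (by positivity) (by positivity)]
    calc ((2:ℝ) ^ m)⁻¹ * (3 * 2 ^ m) = 3 := by field_simp
    _ ≤ |((3 * (p - k) + 2 ^ m : ℤ) : ℝ)| * 3 := by nlinarith
  have e1 : ((k : ℝ) + 1) * h = a + h := by rw [ha]; ring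
  have e2 : ((p : ℝ) + 1) * h + 1 / 3 = b + h := by rw [hb]; ring
  rw [e1] at hzI
  rw [e2] at hzJ
  have goalrw : slope' f u (u + d) / 12 ≤ max (slope' f a (a + h)) (slope' f b (b + h)) → True := fun _ => trivial
  rw [e1, e2]
  simp only [slope']
  have eden1 : a + h - a = h := by ring
  have eden3 : u + d - u = d := by ring
  rw [show b + h - b = h from by ring, eden1, eden3]
  have hwnn : (0 : ℝ) ≤ f (u + d) - f u := sub_nonneg.mpr (hf (by linarith [hd0.le]))
  have hxnn : (0 : ℝ) ≤ f (a + h) - f a := sub_nonneg.mpr (hf (by linarith))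
  have hynn : (0 : ℝ) ≤ f (b + h) - f b := sub_nonneg.mpr (hf (by linarith))
  rcases abs_cases (b - a) with ⟨he, _⟩ | ⟨he, _⟩
  · have hab : h / 3 ≤ b - a := by rw [he] at key; exact key
    have hS := aux_sum f hf a b z u d h hd₁ hab hzI hzJ hzL
    exact final_ineq _ _ _ _ _ hd0 hpos hd6 hxnn hwnn hS
  · have hab : h / 3 ≤ a - b := by rw [he] at key; linarith
    have hS := aux_sum f hf b a z u d h hd₁ hab hzJ hzI hzL
    rw [max_comm]
    exact final_ineq _ _ _ _ _ hd0 hpos hd6 hynn hwnn (by linarith)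
end
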